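/- Let N, N_S, P be positive naturals with P ∣ N_S and N_S ∣ N, and define α, β as in the full SmartOTPs scheme (α(i) = P - ⌊((i % N_S)·P)/N_S⌋ - 1, β(i) = ⌊i/N_S⌋·(N_S/P) + (i % (N_S/P))). Then the map i ↦ (α(i), β(i)) is injective on {0, 1, ..., N-1}. -/

import Mathlib

/-- The map `i ↦ (α(i), β(i))` of the full SmartOTPs scheme, with
`α(i) = P - ⌊((i % N_S)·P)/N_S⌋ - 1` and
`β(i) = ⌊i/N_S⌋·(N_S/P) + (i % (N_S/P))`, is injective on `{0, …, N-1}`. -/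
theorem alpha_beta_injOn (N NS P : ℕ) (hN : 0 < N) (hNS : 0 < NS) (hP : 0 < P)
    (hPd : P ∣ NS) (hNSd : NS ∣ N) :
    Set.InjOn
      (fun i => (P - (i % NS) * P / NS - 1, i / NS * (NS / P) + i % (NS / P)))
      (Set.Iio N) := by
  obtain ⟨Q, hQ⟩ := hPd
  have hQ0 : 0 < Q := by
    rcases Nat.eq_zero_or_pos Q with h | h
    · simp [h] at hQ; omega
    · exact h
  have hNSP : NS / P = Q := by rw [hQ, Nat.mul_div_cancel_left _ hP]
  have key : ∀ k : ℕ, k % NS * P / NS = k % NS / Q := by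
    intro k
    rw [hQ, mul_comm (k % (P * Q)) P, Nat.mul_div_mul_left _ _ hP]
  have hlt : ∀ k : ℕ, k % NS / Q < P := by
    intro k
    have : k % NS < NS := Nat.mod_lt _ hNS
    rw [Nat.div_lt_iff_lt_mul hQ0, ← hQ]
    exact this
  have ediv : ∀ d m : ℕ, m < Q → (d * Q + m) / Q = d := by
    intro d m hm
    rw [add_comm, mul_comm, Nat.add_mul_div_left _ _ hQ0, Nat.div_eq_of_lt hm, zero_add]
  have emod : ∀ d m : ℕ, (d * Q + m) % Q = m % Q := by
    intro d m
    rw [mul_comm, Nat.mul_add_mod]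
  intro i _ j _ h
  simp only [Prod.mk.injEq] at h
  obtain ⟨h1, h2⟩ := h
  rw [key i, key j] at h1
  have hdiv : i % NS / Q = j % NS / Q := by
    have := hlt i; have := hlt j; omega
  rw [hNSP] at h2
  have hq : i / NS = j / NS := by
    have h3 := congrArg (· / Q) h2
    rwa [ediv _ _ (Nat.mod_lt i hQ0), ediv _ _ (Nat.mod_lt j hQ0)] at h3
  have hm : i % Q = j % Q := by
    have h3 := congrArg (· % Q) h2
    rwa [emod, emod, Nat.mod_mod_of_dvd _ dvd_rfl, Nat.mod_mod_of_dvd _ dvd_rfl] at h3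
  have hdQ : Q ∣ NS := ⟨P, by rw [hQ, mul_comm]⟩
  have hi1 : i % NS % Q = i % Q := Nat.mod_mod_of_dvd i hdQ
  have hj1 : j % NS % Q = j % Q := Nat.mod_mod_of_dvd j hdQ
  have hi2 : Q * (i % NS / Q) + i % NS % Q = i % NS := Nat.div_add_mod _ _
  have hj2 : Q * (j % NS / Q) + j % NS % Q = j % NS := Nat.div_add_mod _ _
  have hi3 : NS * (i / NS) + i % NS = i := Nat.div_add_mod _ _
  have hj3 : NS * (j / NS) + j % NS = j := Nat.div_add_mod _ _
  have hmod : i % NS = j % NS := by rw [← hi2, ← hj2, hdiv, hi1, hj1, hm]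
  rw [← hi3, ← hj3, hq, hmod]
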